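/- Let A and B be m×n complex matrices, L(λ) = λB + A, let α, β ∈ ℂ with α ≠ β, and let d₁, d₂ ≥ 1. Let Q be the d₂m × d₁n block matrix (with d₂×d₁ blocks of size m×n) whose (1, d₁) block equals B and all of whose other blocks are zero. Then the block matrix [[P_α^{d₁}(L), 0], [Q, P_β^{d₂}(L)]] has the same rank as the block-diagonal matrix diag(P_α^{d₁}(L), P_β^{d₂}(L)); that is, its rank equals rank(P_α^{d₁}(L)) + rank(P_β^{d₂}(L)). -/

import Mathlib

/-- For the pencil `L(λ) = λB + A`, the `dm × dn` block matrix `P_μ^d(L)` with diagonal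
blocks `L(μ) = μB + A` and first-subdiagonal blocks `B`. -/
def pencilBlockMat {m n : ℕ} (A B : Matrix (Fin m) (Fin n) ℂ) (μ : ℂ) (d : ℕ) :
    Matrix (Fin d × Fin m) (Fin d × Fin n) ℂ :=
  fun p q =>
    if p.1 = q.1 then (μ • B + A) p.2 q.2
    else if (p.1 : ℕ) = (q.1 : ℕ) + 1 then B p.2 q.2 else 0

open Matrix

/-- One row-building step for the coefficient sequence. -/
noncomputable def pencilRow (γ : ℂ) (f : ℕ → ℂ) : ℕ → ℂ
  | 0 => 0
  | (k+1) => (f (k+1) - pencilRow γ f k) / γ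

/-- Coefficient sequence used to build the equivalence transformation. -/
noncomputable def pencilG (γ : ℂ) : ℕ → ℕ → ℂ
  | 0 => pencilRow γ (fun k => if k = 1 then -1 else 0)
  | (i+1) => pencilRow γ (pencilG γ i)

lemma pencilG_zero_succ (γ : ℂ) (k : ℕ) :
    pencilG γ 0 (k+1) = ((if k = 0 then -1 else 0) - pencilG γ 0 k) / γ := by
  show pencilRow γ _ (k+1) = _
  rw [pencilRow]
  norm_num [Nat.succ_inj]
  rfl

lemma pencilG_succ_succ (γ : ℂ) (i k : ℕ) :
    pencilG γ (i+1) (k+1) = (pencilG γ i (k+1) - pencilG γ (i+1) k) / γ := by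
  show pencilRow γ _ (k+1) = _
  rw [pencilRow]
  rfl

@[simp] lemma pencilG_zero (γ : ℂ) (i : ℕ) : pencilG γ i 0 = 0 := by cases i <;> rfl

lemma pencilG_rec (γ : ℂ) (hγ : γ ≠ 0) (i k : ℕ) :
    γ * pencilG γ i (k+1) + pencilG γ i k
      - (if i = 0 then 0 else pencilG γ (i-1) (k+1))
      = -(if i = 0 ∧ k = 0 then 1 else 0) := by
  cases i with
  | zero =>
      simp only [if_pos rfl, true_and, pencilG_zero_succ]
      field_simp
      split_ifs <;> ring
  | succ i =>
      simp only [Nat.succ_ne_zero, if_neg, false_and, Nat.add_sub_cancel, if_false,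
        pencilG_succ_succ]
      field_simp
      ring

/-- Rank of a block-diagonal matrix is the sum of the ranks. -/
lemma rank_fromBlocks_diag {m₁ m₂ n₁ n₂ : Type*} [Fintype m₁] [Fintype m₂]
    [Fintype n₁] [Fintype n₂] [DecidableEq n₁] [DecidableEq n₂]
    (A : Matrix m₁ n₁ ℂ) (D : Matrix m₂ n₂ ℂ) :
    (fromBlocks A 0 0 D).rank = A.rank + D.rank := by
  classical
  let e_m : ((m₁ ⊕ m₂) → ℂ) ≃ₗ[ℂ] ((m₁ → ℂ) × (m₂ → ℂ)) :=
    LinearEquiv.sumArrowLequivProdArrow _ _ ℂ ℂ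
  let e_n : ((n₁ ⊕ n₂) → ℂ) ≃ₗ[ℂ] ((n₁ → ℂ) × (n₂ → ℂ)) :=
    LinearEquiv.sumArrowLequivProdArrow _ _ ℂ ℂ
  have key : (fromBlocks A 0 0 D).mulVecLin
      = e_m.symm.toLinearMap ∘ₗ (A.mulVecLin.prodMap D.mulVecLin) ∘ₗ e_n.toLinearMap := by
    ext v x
    cases x with
    | inl i =>
        simp [e_m, e_n, mulVec, dotProduct, Fintype.sum_sum_type, fromBlocks,
          LinearEquiv.sumArrowLequivProdArrow]
    | inr i =>
        simp [e_m, e_n, mulVec, dotProduct, Fintype.sum_sum_type, fromBlocks,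
          LinearEquiv.sumArrowLequivProdArrow]
  have hpm : LinearMap.range (A.mulVecLin.prodMap D.mulVecLin)
      = (LinearMap.range A.mulVecLin).prod (LinearMap.range D.mulVecLin) := by
    ext x
    simp only [LinearMap.mem_range, Submodule.mem_prod]
    constructor
    · rintro ⟨v, rfl⟩
      exact ⟨⟨v.1, rfl⟩, ⟨v.2, rfl⟩⟩
    · rintro ⟨⟨v, hv⟩, ⟨w, hw⟩⟩
      exact ⟨(v, w), Prod.ext hv hw⟩
  have hrange : LinearMap.range (fromBlocks A 0 0 D).mulVecLin
      = Submodule.map e_m.symm.toLinearMap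
          ((LinearMap.range A.mulVecLin).prod (LinearMap.range D.mulVecLin)) := by
    rw [key, LinearMap.range_comp, LinearMap.range_comp_of_range_eq_top _
      (LinearMap.range_eq_top_of_surjective _ e_n.surjective), hpm]
  let p := LinearMap.range A.mulVecLin
  let q := LinearMap.range D.mulVecLin
  have e : ↥(p.prod q) ≃ₗ[ℂ] (↥p × ↥q) :=
    { toFun := fun x => (⟨x.1.1, x.2.1⟩, ⟨x.1.2, x.2.2⟩)
      invFun := fun x => ⟨(x.1.1, x.2.1), ⟨x.1.2, x.2.2⟩⟩
      map_add' := fun _ _ => rfl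
      map_smul' := fun _ _ => rfl
      left_inv := fun _ => rfl
      right_inv := fun _ => rfl }
  rw [Matrix.rank, hrange, LinearEquiv.finrank_map_eq, e.finrank_eq, Module.finrank_prod]
  rfl

lemma mulX_entry {m n d₁ d₂ : ℕ} (γ : ℂ) (A B : Matrix (Fin m) (Fin n) ℂ) (α : ℂ)
    (i : Fin d₂) (r : Fin m) (j : Fin d₁) (s : Fin n) :
    ((Matrix.of fun (p : Fin d₂ × Fin m) (q : Fin d₁ × Fin m) =>
        if p.2 = q.2 then pencilG γ (p.1 : ℕ) (d₁ - (q.1 : ℕ)) else 0)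
        * pencilBlockMat A B α d₁) (i, r) (j, s)
      = pencilG γ i (d₁ - (j : ℕ)) * ((α • B + A) r s)
        + pencilG γ i (d₁ - ((j : ℕ) + 1)) * B r s := by
  rw [Matrix.mul_apply, Fintype.sum_prod_type]
  simp only [Matrix.of_apply]
  have h1 : ∀ k : Fin d₁,
      (∑ t : Fin m, (if r = t then pencilG γ (i : ℕ) (d₁ - (k : ℕ)) else 0)
          * pencilBlockMat A B α d₁ (k, t) (j, s))
        = pencilG γ (i : ℕ) (d₁ - (k : ℕ)) * pencilBlockMat A B α d₁ (k, r) (j, s) := by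
    intro k
    simp [ite_mul]
  rw [Finset.sum_congr rfl fun k _ => h1 k]
  have h2 : ∀ k : Fin d₁, pencilG γ (i : ℕ) (d₁ - (k : ℕ)) * pencilBlockMat A B α d₁ (k, r) (j, s)
      = (if k = j then pencilG γ (i : ℕ) (d₁ - (j : ℕ)) * ((α • B + A) r s) else 0)
        + (if (k : ℕ) = (j : ℕ) + 1 then pencilG γ (i : ℕ) (d₁ - ((j : ℕ) + 1)) * B r s
            else 0) := by
    intro k
    unfold pencilBlockMat
    rcases eq_or_ne k j with hk | hk
    · subst hk
      have : ¬((k : ℕ) = (k : ℕ) + 1) := by omega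
      simp [this]
    · rcases eq_or_ne ((k : ℕ)) ((j : ℕ) + 1) with hk' | hk'
      · simp [hk, hk']
      · simp [hk, hk']
  rw [Finset.sum_congr rfl fun k _ => h2 k, Finset.sum_add_distrib]
  congr 1
  · simp
  · by_cases hd : (j : ℕ) + 1 < d₁
    · have hiff : ∀ k : Fin d₁, ((k : ℕ) = (j : ℕ) + 1) ↔ k = ⟨(j : ℕ) + 1, hd⟩ := by
        intro k; rw [Fin.ext_iff]
      simp only [hiff]
      simp
    · have h0 : d₁ - ((j : ℕ) + 1) = 0 := by omega
      have hnone : ∀ k : Fin d₁, ¬((k : ℕ) = (j : ℕ) + 1) := by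
        intro k; have := k.isLt; omega
      simp [hnone, h0]

lemma mulY_entry {m n d₁ d₂ : ℕ} (γ : ℂ) (A B : Matrix (Fin m) (Fin n) ℂ) (β : ℂ)
    (i : Fin d₂) (r : Fin m) (j : Fin d₁) (s : Fin n) :
    (pencilBlockMat A B β d₂ * (Matrix.of fun (p : Fin d₂ × Fin n) (q : Fin d₁ × Fin n) =>
        if p.2 = q.2 then -pencilG γ (p.1 : ℕ) (d₁ - (q.1 : ℕ)) else 0)) (i, r) (j, s)
      = -(pencilG γ (i : ℕ) (d₁ - (j : ℕ)) * ((β • B + A) r s))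
        - (if (i : ℕ) = 0 then 0
            else pencilG γ ((i : ℕ) - 1) (d₁ - (j : ℕ)) * B r s) := by
  rw [Matrix.mul_apply, Fintype.sum_prod_type]
  simp only [Matrix.of_apply]
  have h1 : ∀ l : Fin d₂,
      (∑ t : Fin n, pencilBlockMat A B β d₂ (i, r) (l, t)
          * (if t = s then -pencilG γ (l : ℕ) (d₁ - (j : ℕ)) else 0))
        = pencilBlockMat A B β d₂ (i, r) (l, s) * (-pencilG γ (l : ℕ) (d₁ - (j : ℕ))) := by
    intro l
    simp [mul_ite]
  rw [Finset.sum_congr rfl fun l _ => h1 l]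
  have h2 : ∀ l : Fin d₂, pencilBlockMat A B β d₂ (i, r) (l, s)
        * (-pencilG γ (l : ℕ) (d₁ - (j : ℕ)))
      = (if l = i then -(pencilG γ (i : ℕ) (d₁ - (j : ℕ)) * ((β • B + A) r s)) else 0)
        + (if (i : ℕ) = (l : ℕ) + 1 then
            -(pencilG γ ((i : ℕ) - 1) (d₁ - (j : ℕ)) * B r s) else 0) := by
    intro l
    unfold pencilBlockMat
    rcases eq_or_ne i l with hl | hl
    · subst hl
      have : ¬((i : ℕ) = (i : ℕ) + 1) := by omega
      simp [this]
      ring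
    · rcases eq_or_ne ((i : ℕ)) ((l : ℕ) + 1) with hl' | hl'
      · have hv : (l : ℕ) = (i : ℕ) - 1 := by omega
        rw [if_neg hl, if_neg (Ne.symm hl), if_pos hl', if_pos hl', hv]
        ring
      · simp [hl, Ne.symm hl, hl']
  rw [Finset.sum_congr rfl fun l _ => h2 l, Finset.sum_add_distrib]
  have hS1 : (∑ l : Fin d₂,
      if l = i then -(pencilG γ (i : ℕ) (d₁ - (j : ℕ)) * ((β • B + A) r s)) else 0)
      = -(pencilG γ (i : ℕ) (d₁ - (j : ℕ)) * ((β • B + A) r s)) := by simp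
  have hS2 : (∑ l : Fin d₂,
      if (i : ℕ) = (l : ℕ) + 1 then -(pencilG γ ((i : ℕ) - 1) (d₁ - (j : ℕ)) * B r s) else 0)
      = -(if (i : ℕ) = 0 then 0
          else pencilG γ ((i : ℕ) - 1) (d₁ - (j : ℕ)) * B r s) := by
    by_cases hi : (i : ℕ) = 0
    · have hnone : ∀ l : Fin d₂, ¬((i : ℕ) = (l : ℕ) + 1) := by intro l; omega
      simp only [hnone, if_false, if_pos hi]
      simp
    · have hlt : (i : ℕ) - 1 < d₂ := by have := i.isLt; omega
      have hiff : ∀ l : Fin d₂, ((i : ℕ) = (l : ℕ) + 1) ↔ l = ⟨(i : ℕ) - 1, hlt⟩ := by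
        intro l; rw [Fin.ext_iff]; show _ ↔ (l : ℕ) = (i : ℕ) - 1; omega
      simp only [hiff, Finset.sum_ite_eq', Finset.mem_univ, if_true, if_neg hi]
  rw [hS1, hS2]
  ring

/-- For `α ≠ β`, the coupled block matrix `[[P_α^{d₁}(L), 0], [Q, P_β^{d₂}(L)]]`, where `Q`
has a single block `B` in its `(1, d₁)` block position, has the same rank as
`diag(P_α^{d₁}(L), P_β^{d₂}(L))`, namely `rank P_α^{d₁}(L) + rank P_β^{d₂}(L)`. -/
theorem rank_fromBlocks_pencil (m n d₁ d₂ : ℕ) (hd₁ : 1 ≤ d₁) (hd₂ : 1 ≤ d₂)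
    (A B : Matrix (Fin m) (Fin n) ℂ) (α β : ℂ) (hαβ : α ≠ β) :
    (Matrix.fromBlocks (pencilBlockMat A B α d₁) 0
        (fun p q =>
          if (p.1 : ℕ) = 0 ∧ (q.1 : ℕ) = d₁ - 1 then B p.2 q.2 else 0 :
          Matrix (Fin d₂ × Fin m) (Fin d₁ × Fin n) ℂ)
        (pencilBlockMat A B β d₂)).rank
      = (pencilBlockMat A B α d₁).rank + (pencilBlockMat A B β d₂).rank := by
  classical
  have hγ : α - β ≠ 0 := sub_ne_zero.mpr hαβ
  set X : Matrix (Fin d₂ × Fin m) (Fin d₁ × Fin m) ℂ :=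
    Matrix.of fun (p : Fin d₂ × Fin m) (q : Fin d₁ × Fin m) =>
      if p.2 = q.2 then pencilG (α - β) (p.1 : ℕ) (d₁ - (q.1 : ℕ)) else 0 with hX
  set Y : Matrix (Fin d₂ × Fin n) (Fin d₁ × Fin n) ℂ :=
    Matrix.of fun (p : Fin d₂ × Fin n) (q : Fin d₁ × Fin n) =>
      if p.2 = q.2 then -pencilG (α - β) (p.1 : ℕ) (d₁ - (q.1 : ℕ)) else 0 with hY
  set Q : Matrix (Fin d₂ × Fin m) (Fin d₁ × Fin n) ℂ :=
    (fun p q => if (p.1 : ℕ) = 0 ∧ (q.1 : ℕ) = d₁ - 1 then B p.2 q.2 else 0) with hQdef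
  have hkey : X * pencilBlockMat A B α d₁ + Q + pencilBlockMat A B β d₂ * Y = 0 := by
    ext ⟨i, r⟩ ⟨j, s⟩
    rw [Matrix.add_apply, Matrix.add_apply, hX, hY,
      mulX_entry (α - β) A B α i r j s, mulY_entry (α - β) A B β i r j s]
    have hj := j.isLt
    have hQ : Q (i, r) (j, s)
        = (if (i : ℕ) = 0 ∧ d₁ - 1 - (j : ℕ) = 0 then (1 : ℂ) else 0) * B r s := by
      have hiff : ((i : ℕ) = 0 ∧ (j : ℕ) = d₁ - 1)
          ↔ ((i : ℕ) = 0 ∧ d₁ - 1 - (j : ℕ) = 0) := by omega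
      show (if (i : ℕ) = 0 ∧ (j : ℕ) = d₁ - 1 then B r s else 0) = _
      by_cases h : (i : ℕ) = 0 ∧ d₁ - 1 - (j : ℕ) = 0
      · rw [if_pos (hiff.mpr h), if_pos h]; ring
      · rw [if_neg (fun hc => h (hiff.mp hc)), if_neg h]; ring
    rw [hQ]
    have hd1 : d₁ - ((j : ℕ) + 1) = d₁ - 1 - (j : ℕ) := by omega
    have hk1 : d₁ - (j : ℕ) = (d₁ - 1 - (j : ℕ)) + 1 := by omega
    rw [hd1, hk1]
    have hite : (if (i : ℕ) = 0 then (0 : ℂ)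
          else pencilG (α - β) ((i : ℕ) - 1) ((d₁ - 1 - (j : ℕ)) + 1) * B r s)
        = (if (i : ℕ) = 0 then 0
          else pencilG (α - β) ((i : ℕ) - 1) ((d₁ - 1 - (j : ℕ)) + 1)) * B r s := by
      split_ifs <;> ring
    rw [hite]
    have hrec := pencilG_rec (α - β) hγ (i : ℕ) (d₁ - 1 - (j : ℕ))
    simp only [Matrix.add_apply, Matrix.smul_apply, smul_eq_mul, Matrix.zero_apply]
    linear_combination hrec * B r s
  have hM : (Matrix.fromBlocks 1 0 X 1 :
          Matrix (Fin d₁ × Fin m ⊕ Fin d₂ × Fin m) (Fin d₁ × Fin m ⊕ Fin d₂ × Fin m) ℂ)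
        * Matrix.fromBlocks (pencilBlockMat A B α d₁) 0 Q (pencilBlockMat A B β d₂)
        * (Matrix.fromBlocks 1 0 Y 1 :
          Matrix (Fin d₁ × Fin n ⊕ Fin d₂ × Fin n) (Fin d₁ × Fin n ⊕ Fin d₂ × Fin n) ℂ)
      = Matrix.fromBlocks (pencilBlockMat A B α d₁) 0 0 (pencilBlockMat A B β d₂) := by
    rw [Matrix.fromBlocks_multiply, Matrix.fromBlocks_multiply]
    simp only [Matrix.one_mul, Matrix.mul_one, Matrix.zero_mul, Matrix.mul_zero, add_zero,
      zero_add]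
    rw [hkey]
  have hdetU : IsUnit (Matrix.fromBlocks (1 : Matrix (Fin d₁ × Fin m) _ ℂ) 0 X
      (1 : Matrix (Fin d₂ × Fin m) _ ℂ)).det := by
    rw [Matrix.det_fromBlocks_zero₁₂]
    simp
  have hdetV : IsUnit (Matrix.fromBlocks (1 : Matrix (Fin d₁ × Fin n) _ ℂ) 0 Y
      (1 : Matrix (Fin d₂ × Fin n) _ ℂ)).det := by
    rw [Matrix.det_fromBlocks_zero₁₂]
    simp
  rw [← rank_fromBlocks_diag (pencilBlockMat A B α d₁) (pencilBlockMat A B β d₂), ← hM,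
    Matrix.rank_mul_eq_left_of_isUnit_det _ _ hdetV,
    Matrix.rank_mul_eq_right_of_isUnit_det _ _ hdetU]
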